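/- Two words u and v over the same ordered alphabet A are conjugate (i.e., u = st and v = ts for some words s, t) if and only if bwt_A(u) = bwt_A(v). -/

import Mathlib

/-- `wordPow u p` is the `p`-fold concatenation `u^p`. -/
def wordPow {A : Type*} (u : List A) : ℕ → List A
  | 0 => []
  | n + 1 => u ++ wordPow u n

/-- A word is primitive if it is not a proper integer power of another word. -/
def Primitive {A : Type*} (w : List A) : Prop :=
  ∀ (v : List A) (m : ℕ), w = wordPow v m → m = 1

/-- The Burrows–Wheeler transform of a word: the last letters of its cyclic rotations
listed in non-decreasing lexicographic order. -/
def bwt {A : Type*} [LinearOrder A] (w : List A) : List A :=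
  (Multiset.sort
    (((List.range w.length).map (fun i => w.rotate i) : List (List A)) : Multiset (List A)) (· ≤ ·)).filterMap
    List.getLast?

/-- `w` is `π`-clustering: its BWT is `π(a₁)^{k₁} ⋯ π(a_k)^{k_k}` where `a₁ < … < a_k`
enumerates the alphabet and `k_i` is the number of occurrences of `π(a_i)` in `w`. -/
def Clustering {A : Type*} [LinearOrder A] [Fintype A] (π : Equiv.Perm A) (w : List A) : Prop :=
  bwt w =
    ((Finset.univ.sort (· ≤ ·)).map (fun a => List.replicate (w.count (π a)) (π a))).flatten

namespace BwtAux

open List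

variable {A : Type*} [LinearOrder A]

/-- The multiset of cyclic rotations of a word. -/
def rotM (w : List A) : Multiset (List A) :=
  (((List.range w.length).map (fun i => w.rotate i) : List (List A)) : Multiset (List A))

/-- The sorted list of cyclic rotations of a word. -/
def srt (w : List A) : List (List A) := Multiset.sort (rotM w) (· ≤ ·)

lemma bwt_eq (w : List A) : bwt w = (srt w).filterMap List.getLast? := rfl

lemma coe_srt (w : List A) : ((srt w : List (List A)) : Multiset (List A)) = rotM w :=
  Multiset.sort_eq _ _

lemma rotM_shift (w : List A) (j : ℕ) :
    (((List.range w.length).map (fun i => w.rotate (i + j)) : List (List A)) : Multiset (List A))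
      = rotM w := by
  induction j with
  | zero => simp [rotM]
  | succ j ih =>
    have key : (List.range w.length).map (fun i => w.rotate (i + j)) ++ [w.rotate j]
        = w.rotate j :: (List.range w.length).map (fun i => w.rotate (i + (j + 1))) := by
      have h1 : (List.range (w.length + 1)).map (fun i => w.rotate (i + j))
          = (List.range w.length).map (fun i => w.rotate (i + j)) ++ [w.rotate j] := by
        rw [List.range_succ, List.map_append, List.map_singleton, ← List.rotate_rotate,
          List.rotate_length]
      have h2 : (List.range (w.length + 1)).map (fun i => w.rotate (i + j))
          = w.rotate j :: (List.range w.length).map (fun i => w.rotate (i + (j + 1))) := by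
        rw [List.range_succ_eq_map, List.map_cons, List.map_map]
        congr 1
        · simp
        · congr 1
          funext i
          simp only [Function.comp]
          congr 1
          omega
      exact h1.symm.trans h2
    have hperm : ((List.range w.length).map (fun i => w.rotate (i + j)) : List (List A)).Perm
        ((List.range w.length).map (fun i => w.rotate (i + (j + 1)))) := by
      have h1 : (w.rotate j :: (List.range w.length).map (fun i => w.rotate (i + j))
            : List (List A)).Perm
          (w.rotate j :: (List.range w.length).map (fun i => w.rotate (i + (j + 1)))) :=
        ((List.perm_append_singleton _ _).symm).trans (key ▸ List.Perm.refl _)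
      exact (List.perm_cons _).1 h1
    rw [← Multiset.coe_eq_coe.2 hperm, ih]

lemma rotM_rotate (w : List A) (j : ℕ) : rotM (w.rotate j) = rotM w := by
  have hfun : (fun i => (w.rotate j).rotate i) = fun i => w.rotate (i + j) := by
    funext i
    rw [List.rotate_rotate, add_comm]
  have h1 : rotM (w.rotate j)
      = (((List.range w.length).map (fun i => w.rotate (i + j)) : List (List A)) :
          Multiset (List A)) := by
    unfold rotM
    rw [List.length_rotate, hfun]
  rw [h1]
  exact rotM_shift w j

lemma rotM_map_rotR (w : List A) :
    (rotM w).map (fun r => r.rotate (r.length - 1)) = rotM w := by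
  unfold rotM
  rw [Multiset.map_coe, List.map_map]
  have hfun : ((fun r : List A => r.rotate (r.length - 1)) ∘ fun i => w.rotate i)
      = fun i => w.rotate (i + (w.length - 1)) := by
    funext i
    simp [Function.comp, List.length_rotate, List.rotate_rotate]
  rw [hfun]
  exact rotM_shift w (w.length - 1)

lemma length_of_mem_rotM {w r : List A} (h : r ∈ rotM w) : r.length = w.length := by
  unfold rotM at h
  rw [Multiset.mem_coe, List.mem_map] at h
  obtain ⟨i, _, rfl⟩ := h
  exact List.length_rotate w i

lemma length_of_mem_srt {w r : List A} (h : r ∈ srt w) : r.length = w.length :=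
  length_of_mem_rotM (by rw [← coe_srt w]; exact Multiset.mem_coe.2 h)

/-- Rotating right by one and taking `k+1` letters. -/
lemma take_rotR {r : List A} (hr : r ≠ []) {k : ℕ} (hk : k < r.length) :
    (r.rotate (r.length - 1)).take (k + 1) = r.getLast hr :: r.take k := by
  have hsplit : r.dropLast ++ [r.getLast hr] = r := List.dropLast_append_getLast hr
  have key : ∀ (l : List A) (a : A), (l ++ [a]).rotate ((l ++ [a]).length - 1) = a :: l := by
    intro l a
    have hl : (l ++ [a]).length - 1 = l.length := by simp
    rw [hl, List.rotate_eq_drop_append_take (by simp), List.drop_left, List.take_left,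
      List.singleton_append]
  have hrot : r.rotate (r.length - 1) = r.getLast hr :: r.dropLast := by
    conv_lhs => rw [← hsplit]
    exact key _ _
  rw [hrot]
  simp only [List.take_succ_cons]
  congr 1
  rw [List.dropLast_eq_take, List.take_take]
  congr 1
  omega

lemma zip_identity (n k : ℕ) (hk : k < n) :
    ∀ M : List (List A), (∀ r ∈ M, r.length = n) →
      M.map (fun r => (r.rotate (r.length - 1)).take (k + 1))
        = List.zipWith List.cons (M.filterMap List.getLast?) (M.map (List.take k)) := by
  intro M
  induction M with
  | nil => intro _; rfl
  | cons r M ih =>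
    intro hmem
    have hr : r ≠ [] := by
      intro h
      have := hmem r (by simp)
      rw [h] at this
      simp at this
      omega
    have hrl : r.length = n := hmem r (by simp)
    rw [List.map_cons, List.map_cons, List.filterMap_cons,
      List.getLast?_eq_getLast hr]
    simp only [List.zipWith_cons_cons]
    rw [take_rotR hr (by omega), ih (fun s hs => hmem s (by simp [hs]))]

lemma length_filterMap_getLast? (M : List (List A)) (h : ∀ r ∈ M, r ≠ []) :
    (M.filterMap List.getLast?).length = M.length := by
  induction M with
  | nil => rfl
  | cons r M ih =>
    rw [List.filterMap_cons, List.getLast?_eq_getLast (h r (by simp))]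
    simp [ih (fun s hs => h s (by simp [hs]))]

/-- Lexicographic comparison of truncations implies comparison of the full words. -/
lemma take_lex : ∀ (x y : List A) (k : ℕ),
    List.Lex (· < ·) (x.take k) (y.take k) → List.Lex (· < ·) x y := by
  intro x
  induction x with
  | nil =>
    intro y k h
    cases y with
    | nil => simp at h
    | cons b ys => exact List.Lex.nil
  | cons a xs ih =>
    intro y k h
    cases y with
    | nil => simp at h
    | cons b ys =>
      cases k with
      | zero => simp at h
      | succ k =>
        simp only [List.take_succ_cons] at h
        cases h with
        | cons h => exact List.Lex.cons (ih ys k h)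
        | rel h => exact List.Lex.rel h

lemma take_le_take {x y : List A} (h : x ≤ y) (k : ℕ) : x.take k ≤ y.take k := by
  by_contra hc
  rw [not_le] at hc
  have : y < x := take_lex y x k hc
  exact absurd h (not_le.2 this)

/-- The sorted list of `k`-truncations of the rotations of `w`. -/
def P (w : List A) (k : ℕ) : List (List A) :=
  Multiset.sort ((rotM w).map (List.take k)) (· ≤ ·)

lemma P_eq_map_take (w : List A) (k : ℕ) : P w k = (srt w).map (List.take k) := by
  refine (fun hp h1 h2 => List.Perm.eq_of_pairwise' (r := (· ≤ · : List A → List A → Prop)) h1 h2 hp) ?_ ?_ ?_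
  · rw [← Multiset.coe_eq_coe]
    unfold P
    rw [Multiset.sort_eq, ← Multiset.map_coe, coe_srt]
  · exact Multiset.pairwise_sort _ _
  · exact List.Pairwise.map _ (fun {a b} hab => take_le_take hab k)
      (Multiset.pairwise_sort _ _)

lemma P_succ (w : List A) {k : ℕ} (hk : k < w.length) :
    P w (k + 1) = Multiset.sort
      ((List.zipWith List.cons (bwt w) (P w k) : List (List A)) : Multiset (List A)) (· ≤ ·) := by
  unfold P
  congr 1
  calc (rotM w).map (List.take (k + 1))
      = ((rotM w).map (fun r => r.rotate (r.length - 1))).map (List.take (k + 1)) := by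
        rw [rotM_map_rotR]
    _ = (rotM w).map (fun r => (r.rotate (r.length - 1)).take (k + 1)) := by
        rw [Multiset.map_map]; rfl
    _ = (((srt w).map (fun r => (r.rotate (r.length - 1)).take (k + 1)) : List (List A)) :
          Multiset (List A)) := by
        rw [← coe_srt w, Multiset.map_coe]
    _ = ((List.zipWith List.cons (bwt w) (P w k) : List (List A)) : Multiset (List A)) := by
        rw [zip_identity w.length k hk (srt w) (fun r hr => length_of_mem_srt hr),
          P_eq_map_take, bwt_eq]

/-- The inverse-BWT iteration: only depends on the transformed word. -/
def F (L : List A) : ℕ → List (List A)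
  | 0 => List.replicate L.length []
  | k + 1 => Multiset.sort
      ((List.zipWith List.cons L (F L k) : List (List A)) : Multiset (List A)) (· ≤ ·)

lemma length_srt (w : List A) : (srt w).length = w.length := by
  unfold srt
  rw [Multiset.length_sort]
  unfold rotM
  rw [Multiset.coe_card, List.length_map, List.length_range]

lemma length_bwt {w : List A} (hw : w ≠ []) : (bwt w).length = w.length := by
  rw [bwt_eq, length_filterMap_getLast?, length_srt]
  intro r hr h
  apply hw
  have := length_of_mem_srt hr
  rw [h] at this
  simpa using (List.length_eq_zero_iff.1 this.symm)

lemma P_zero (w : List A) : P w 0 = List.replicate w.length [] := by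
  refine (fun hp h1 h2 => List.Perm.eq_of_pairwise' (r := (· ≤ · : List A → List A → Prop)) h1 h2 hp) ?_ ?_ ?_
  · rw [← Multiset.coe_eq_coe]
    unfold P
    rw [Multiset.sort_eq, Multiset.coe_replicate]
    have : (rotM w).map (List.take 0) = (rotM w).map (fun _ => ([] : List A)) := by
      apply Multiset.map_congr rfl; intro x _; simp
    rw [this, Multiset.map_const']
    congr 1
    unfold rotM
    rw [Multiset.coe_card, List.length_map, List.length_range]
  · exact Multiset.pairwise_sort _ _
  · exact List.pairwise_replicate.2 (Or.inr le_rfl)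

lemma F_eq_P {w : List A} (hw : w ≠ []) : ∀ k, k ≤ w.length → F (bwt w) k = P w k := by
  intro k
  induction k with
  | zero =>
    intro _
    show List.replicate (bwt w).length ([] : List A) = P w 0
    rw [length_bwt hw, P_zero]
  | succ k ih =>
    intro hk
    show Multiset.sort _ (· ≤ ·) = _
    rw [ih (by omega), P_succ w (by omega)]

lemma srt_eq_P (w : List A) : srt w = P w w.length := by
  unfold srt P
  congr 1
  have : (rotM w).map (List.take w.length) = (rotM w).map id := by
    apply Multiset.map_congr rfl
    intro r hr
    simp [List.take_of_length_le (le_of_eq (length_of_mem_rotM hr))]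
  rw [this, Multiset.map_id]

lemma bwt_nil : bwt ([] : List A) = [] := by
  simp [bwt]

lemma eq_nil_of_bwt_eq_nil {w : List A} (h : bwt w = []) : w = [] := by
  by_contra hw
  have := length_bwt hw
  rw [h] at this
  simp at this
  exact hw (List.length_eq_zero_iff.1 this.symm)

/-- The hard direction: the BWT determines the multiset of rotations. -/
lemma rotM_eq_of_bwt_eq {u v : List A} (h : bwt u = bwt v) : rotM u = rotM v := by
  by_cases hu : u = []
  · subst hu
    rw [bwt_nil] at h
    have hv := eq_nil_of_bwt_eq_nil h.symm
    subst hv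
    rfl
  · have hv : v ≠ [] := by
      intro hv
      subst hv
      rw [bwt_nil] at h
      exact hu (eq_nil_of_bwt_eq_nil h)
    have hlen : u.length = v.length := by
      rw [← length_bwt hu, ← length_bwt hv, h]
    have : srt u = srt v := by
      rw [srt_eq_P, srt_eq_P, ← F_eq_P hu u.length le_rfl,
        ← F_eq_P hv v.length le_rfl, h, hlen]
    rw [← coe_srt u, ← coe_srt v, this]

lemma bwt_eq_of_rotM_eq {u v : List A} (h : rotM u = rotM v) : bwt u = bwt v := by
  rw [bwt_eq, bwt_eq]
  unfold srt
  rw [h]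

end BwtAux

/-- Two words over the same ordered alphabet are conjugate if and only if they have the
same Burrows–Wheeler transform. -/
theorem bwt_eq_iff_conjugate {A : Type*} [LinearOrder A] (u v : List A) :
    (∃ s t : List A, u = s ++ t ∧ v = t ++ s) ↔ bwt u = bwt v := by
  constructor
  · rintro ⟨s, t, rfl, rfl⟩
    apply BwtAux.bwt_eq_of_rotM_eq
    have : t ++ s = (s ++ t).rotate s.length := by
      rw [List.rotate_eq_drop_append_take (by simp), List.drop_left, List.take_left]
    rw [this, BwtAux.rotM_rotate]
  · intro h
    have hrot := BwtAux.rotM_eq_of_bwt_eq h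
    by_cases hu : u = []
    · subst hu
      have : v.length = 0 := by
        have := congrArg Multiset.card hrot
        unfold BwtAux.rotM at this
        simpa using this.symm
      refine ⟨[], [], by simp, by simp [List.length_eq_zero_iff.1 this]⟩
    · have hmem : u ∈ BwtAux.rotM v := by
        rw [← hrot]
        unfold BwtAux.rotM
        rw [Multiset.mem_coe, List.mem_map]
        exact ⟨0, by simpa using List.length_pos_iff.2 hu, List.rotate_zero u⟩
      unfold BwtAux.rotM at hmem
      rw [Multiset.mem_coe, List.mem_map] at hmem
      obtain ⟨i, hi, rfl⟩ := hmem
      rw [List.mem_range] at hi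
      refine ⟨v.drop i, v.take i, ?_, (List.take_append_drop i v).symm⟩
    
      rw [List.rotate_eq_drop_append_take (le_of_lt hi)]
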